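/- In a directed acyclic graph G, let T (treatment), P (placebo outcome), and Y (outcome) be distinct vertices such that P is not an ancestor of T and Y is not an ancestor of T. Let S be a set of vertices containing no descendants of P and no descendants of T. If every back-door path from T to P (a path starting with an edge into T) that is unblocked given S contains, as its final edge, an edge into P, and conditioning on a set of descendants of P can block such a path unblocked by S, then a contradiction arises; i.e., adding descendants of P to the conditioning set S cannot block any back-door path from T to P that S leaves unblocked. -/
import Mathlib


/-! Directed walks in a digraph `G : V → V → Prop` together with the notions needed for
d-separation: colliders, blocking, back-door paths. -/

variable {V : Type*}

/-- A walk in a directed graph that may traverse edges in either direction.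
`fwd h w` prepends the edge `a ⟶ b` (traversed from `a` towards `b`),
`bwd h w` prepends the edge `b ⟶ a` (traversed from `a` towards `b` against its direction). -/
inductive DWalk (G : V → V → Prop) : V → V → Type _
  | nil (a : V) : DWalk G a a
  | fwd {a b c : V} (h : G a b) (w : DWalk G b c) : DWalk G a c
  | bwd {a b c : V} (h : G b a) (w : DWalk G b c) : DWalk G a c

namespace DWalk

variable {G : V → V → Prop}

/-- Vertices visited by the walk, in order. -/
def support : {a c : V} → DWalk G a c → List V
  | a, _, nil _ => [a]
  | a, _, fwd _ w => a :: w.support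
  | a, _, bwd _ w => a :: w.support

/-- A path is a walk with no repeated vertices. -/
def IsPath {a c : V} (w : DWalk G a c) : Prop := w.support.Nodup

/-- `Des G v x`: `x` is a (strict) descendant of `v`, i.e. reachable by a nonempty
directed path. -/
def Des (G : V → V → Prop) (v x : V) : Prop := Relation.TransGen G v x

/-- The walk starts with an edge pointing into its first vertex (back-door). -/
def StartsInto : {a c : V} → DWalk G a c → Prop
  | _, _, nil _ => False
  | _, _, fwd _ _ => False
  | _, _, bwd _ _ => True

/-- The walk ends with an edge pointing into its last vertex. -/
def EndsInto : {a c : V} → DWalk G a c → Prop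
  | _, _, nil _ => False
  | _, _, fwd _ (nil _) => True
  | _, _, bwd _ (nil _) => False
  | _, _, fwd _ (fwd h w) => EndsInto (fwd h w)
  | _, _, fwd _ (bwd h w) => EndsInto (bwd h w)
  | _, _, bwd _ (fwd h w) => EndsInto (fwd h w)
  | _, _, bwd _ (bwd h w) => EndsInto (bwd h w)

/-- Concatenation of walks. -/
def append : {a b c : V} → DWalk G a b → DWalk G b c → DWalk G a c
  | _, _, _, nil _, w => w
  | _, _, _, fwd h w₁, w₂ => fwd h (append w₁ w₂)
  | _, _, _, bwd h w₁, w₂ => bwd h (append w₁ w₂)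

/-- `b` occurs as a collider (`→ b ←`) at some interior position of the walk. -/
def IsColliderOn : {a c : V} → DWalk G a c → V → Prop
  | _, _, nil _, _ => False
  | _, _, fwd _ (nil _), _ => False
  | _, _, bwd _ (nil _), _ => False
  | _, _, fwd (b := b) _ (fwd h w), x => IsColliderOn (fwd h w) x
  | _, _, fwd (b := b) _ (bwd h w), x => x = b ∨ IsColliderOn (bwd h w) x
  | _, _, bwd (b := b) _ (fwd h w), x => IsColliderOn (fwd h w) x
  | _, _, bwd (b := b) _ (bwd h w), x => IsColliderOn (bwd h w) x

/-- `b` occurs as a non-collider at some interior position of the walk. -/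
def IsNonColliderOn : {a c : V} → DWalk G a c → V → Prop
  | _, _, nil _, _ => False
  | _, _, fwd _ (nil _), _ => False
  | _, _, bwd _ (nil _), _ => False
  | _, _, fwd (b := b) _ (fwd h w), x => x = b ∨ IsNonColliderOn (fwd h w) x
  | _, _, fwd (b := b) _ (bwd h w), x => IsNonColliderOn (bwd h w) x
  | _, _, bwd (b := b) _ (fwd h w), x => x = b ∨ IsNonColliderOn (fwd h w) x
  | _, _, bwd (b := b) _ (bwd h w), x => x = b ∨ IsNonColliderOn (bwd h w) x

/-- The walk is blocked by the conditioning set `S` (d-separation blocking): some interior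
non-collider lies in `S`, or some interior collider has neither itself nor any of its
descendants in `S`. -/
def Blocked (S : Set V) : {a c : V} → DWalk G a c → Prop
  | _, _, nil _ => False
  | _, _, fwd _ (nil _) => False
  | _, _, bwd _ (nil _) => False
  | _, _, fwd (b := b) _ (fwd h w) => b ∈ S ∨ Blocked S (fwd h w)
  | _, _, fwd (b := b) _ (bwd h w) =>
      (b ∉ S ∧ ∀ x, Des G b x → x ∉ S) ∨ Blocked S (bwd h w)
  | _, _, bwd (b := b) _ (fwd h w) => b ∈ S ∨ Blocked S (fwd h w)
  | _, _, bwd (b := b) _ (bwd h w) => b ∈ S ∨ Blocked S (bwd h w)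

end DWalk

/-- d-separation: every path between `a` and `c` is blocked by `S`. -/
def DSep (G : V → V → Prop) (S : Set V) (a c : V) : Prop :=
  ∀ w : DWalk G a c, w.IsPath → w.Blocked S

/-- Acyclicity of a directed graph. -/
def Acyclic (G : V → V → Prop) : Prop := ∀ v : V, ¬ Relation.TransGen G v v

open DWalk

section Aux

variable {G : V → V → Prop}

/-- The walk is empty or starts with a forward edge. -/
def StartsFwd : {a c : V} → DWalk G a c → Prop
  | _, _, .nil _ => True
  | _, _, .fwd _ _ => True
  | _, _, .bwd _ _ => False

/-- Rightward chain lemma: following an unblocked walk that begins with a forward edge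
from a descendant of `Pv` yields a contradiction. -/
theorem lemR (Pv : V) (S : Set V) (hS : ∀ v ∈ S, ¬ Des G Pv v) :
    ∀ {a c : V} (w : DWalk G a c), StartsFwd w → ¬ w.Blocked S →
      (∀ x, Des G Pv x → Relation.ReflTransGen G x c → False) →
      Des G Pv a → False
  | a, _, .nil _, _, _, hend, hdes => hend a hdes .refl
  | a, _, .fwd h (.nil _), _, _, hend, hdes => hend a hdes (.single h)
  | a, c, .fwd (b := b) h (.fwd h' w2), _, hnb, hend, hdes => by
      simp only [DWalk.Blocked, not_or] at hnb
      exact lemR Pv S hS (.fwd h' w2) trivial hnb.2 hend (hdes.tail h)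
  | a, c, .fwd (b := b) h (.bwd h' w2), _, hnb, hend, hdes => by
      simp only [DWalk.Blocked, not_or] at hnb
      have hdb : Des G Pv b := hdes.tail h
      rcases hnb with ⟨h1, _⟩
      by_cases hbS : b ∈ S
      · exact hS b hbS hdb
      · push_neg at h1
        obtain ⟨x, hx, hxS⟩ := h1 hbS
        exact hS x hxS (hdb.trans hx)

/-- Main lemma: an unblocked walk stays unblocked after adding descendants of `Pv`. -/
theorem lemU (Pv : V) (S D' : Set V) (hS : ∀ v ∈ S, ¬ Des G Pv v)
    (hD' : ∀ v ∈ D', Des G Pv v) :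
    ∀ {a c : V} (w : DWalk G a c), ¬ w.Blocked S →
      (Des G Pv a → False) →
      (∀ x, Des G Pv x → Relation.ReflTransGen G x c → False) →
      ¬ w.Blocked (S ∪ D')
  | _, _, .nil _, _, _, _ => fun hb => hb
  | _, _, .fwd _ (.nil _), _, _, _ => fun hb => hb
  | _, _, .bwd _ (.nil _), _, _, _ => fun hb => hb
  | a, c, .fwd (b := b) h (.fwd h' w2), hnb, _, hend => by
      simp only [DWalk.Blocked, not_or] at hnb ⊢
      obtain ⟨hbS, hnb2⟩ := hnb
      have hcur : Des G Pv b → False := fun hd =>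
        lemR Pv S hS (.fwd h' w2) trivial hnb2 hend hd
      refine ⟨?_, lemU Pv S D' hS hD' (.fwd h' w2) hnb2 hcur hend⟩
      rintro (hb | hb)
      · exact hbS hb
      · exact hcur (hD' b hb)
  | a, c, .fwd (b := b) h (.bwd h' w2), hnb, _, hend => by
      simp only [DWalk.Blocked, not_or] at hnb ⊢
      obtain ⟨h1, hnb2⟩ := hnb
      have hcur : Des G Pv b → False := by
        intro hdb
        by_cases hbS : b ∈ S
        · exact hS b hbS hdb
        · push_neg at h1
          obtain ⟨x, hx, hxS⟩ := h1 hbS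
          exact hS x hxS (hdb.trans hx)
      refine ⟨?_, lemU Pv S D' hS hD' (.bwd h' w2) hnb2 hcur hend⟩
      rintro ⟨hb1, hb2⟩
      exact h1 ⟨fun hbS => hb1 (Or.inl hbS), fun x hx hxS => hb2 x hx (Or.inl hxS)⟩
  | a, c, .bwd (b := b) h (.fwd h' w2), hnb, _, hend => by
      simp only [DWalk.Blocked, not_or] at hnb ⊢
      obtain ⟨hbS, hnb2⟩ := hnb
      have hcur : Des G Pv b → False := fun hd =>
        lemR Pv S hS (.fwd h' w2) trivial hnb2 hend hd
      refine ⟨?_, lemU Pv S D' hS hD' (.fwd h' w2) hnb2 hcur hend⟩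
      rintro (hb | hb)
      · exact hbS hb
      · exact hcur (hD' b hb)
  | a, c, .bwd (b := b) h (.bwd h' w2), hnb, hcura, hend => by
      simp only [DWalk.Blocked, not_or] at hnb ⊢
      obtain ⟨hbS, hnb2⟩ := hnb
      have hcur : Des G Pv b → False := fun hd => hcura (hd.tail h)
      refine ⟨?_, lemU Pv S D' hS hD' (.bwd h' w2) hnb2 hcur hend⟩
      rintro (hb | hb)
      · exact hbS hb
      · exact hcur (hD' b hb)

end Aux

/-- Adding descendants of the placebo outcome `Pv` to the conditioning set `S` cannot block
any back-door path from the treatment `T` to `Pv` that `S` leaves unblocked, provided the DAG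
is acyclic, `Pv` is not an ancestor of `T`, `Y` is not an ancestor of `T`, and `S` contains
no descendants of `Pv` and no descendants of `T`. -/
theorem stmt4 {V : Type*} (G : V → V → Prop) (hacyc : Acyclic G)
    (T Pv Y : V) (hTP : T ≠ Pv) (hTY : T ≠ Y) (hPY : Pv ≠ Y)
    (hPnotAncT : ¬ Des G Pv T)
    (hYnotAncT : ¬ Des G Y T)
    (S : Set V)
    (hSnoDesP : ∀ v ∈ S, ¬ Des G Pv v)
    (hSnoDesT : ∀ v ∈ S, ¬ Des G T v)
    (D' : Set V) (hD' : ∀ v ∈ D', Des G Pv v)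
    (π : DWalk G T Pv) (hpath : π.IsPath)
    (hback : π.StartsInto) (hend : π.EndsInto)
    (hunblocked : ¬ π.Blocked S) :
    ¬ π.Blocked (S ∪ D') := by
  refine lemU Pv S D' hSnoDesP hD' π hunblocked hPnotAncT ?_
  intro x hx hxP
  rcases (Relation.reflTransGen_iff_eq_or_transGen.mp hxP) with rfl | htg
  · exact hacyc _ hx
  · exact hacyc Pv (hx.trans htg)
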